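/- For any finite group G, the Möbius function of the subgroup lattice satisfies: μ(1,G) is divisible by |G| / |G:G'|_0, where G' is the commutator subgroup and |G:G'|_0 is the square-free part of the index |G:G'|. -/

import Mathlib

open scoped Classical
open Finset

set_option linter.unusedSectionVars false

namespace KT

variable {G : Type*} [Group G] [Fintype G]

noncomputable def cj (x : G) (L : Subgroup G) : Subgroup G :=
  L.map (MulAut.conj x).toMonoidHom

theorem mem_cj {x g : G} {L : Subgroup G} : g ∈ cj x L ↔ x⁻¹ * g * x ∈ L := by
  rw [cj, Subgroup.mem_map_equiv]
  simp [MulAut.conj, mul_assoc]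

theorem cj_cj (x y : G) (L : Subgroup G) : cj x (cj y L) = cj (x * y) L := by
  ext g; simp [mem_cj, mul_assoc]

theorem cj_one (L : Subgroup G) : cj 1 L = L := by ext g; simp [mem_cj]

theorem cj_mono {x : G} {L M : Subgroup G} (h : L ≤ M) : cj x L ≤ cj x M :=
  Subgroup.map_mono h

theorem cj_cancel (x : G) (L : Subgroup G) : cj x⁻¹ (cj x L) = L := by
  rw [cj_cj, inv_mul_cancel, cj_one]

theorem cj_inj {x : G} {L M : Subgroup G} (h : cj x L = cj x M) : L = M := by
  rw [← cj_cancel x L, h, cj_cancel]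

theorem cj_lt_cj {x : G} {L M : Subgroup G} (h : L < M) : cj x L < cj x M := by
  rcases lt_iff_le_and_ne.mp h with ⟨h1, h2⟩
  exact lt_iff_le_and_ne.mpr ⟨cj_mono h1, fun hc => h2 (cj_inj hc)⟩

theorem cj_top (x : G) : cj x (⊤ : Subgroup G) = ⊤ := by
  ext g; simp [mem_cj]

theorem cj_eq_top_iff {x : G} {L : Subgroup G} : cj x L = ⊤ ↔ L = ⊤ := by
  constructor
  · intro h; have := congrArg (cj x⁻¹) h; rwa [cj_cancel, cj_top] at this
  · rintro rfl; exact cj_top x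

theorem card_cj (x : G) (L : Subgroup G) : Nat.card ↥(cj x L) = Nat.card ↥L :=
  Nat.card_congr ((MulEquiv.subgroupMap (MulAut.conj x) L).toEquiv).symm

theorem cj_normalizer (x : G) (L : Subgroup G) :
    cj x (Subgroup.normalizer (L : Set G)) = (Subgroup.normalizer ((cj x L) : Set G)) :=
  Subgroup.map_equiv_normalizer_eq L (MulAut.conj x)

theorem cj_eq_self_iff {x : G} {L : Subgroup G} : cj x L = L ↔ x ∈ (Subgroup.normalizer (L : Set G)) := by
  rw [Subgroup.mem_normalizer_iff]
  constructor
  · intro h g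
    constructor
    · intro hg
      have h1 : x * g * x⁻¹ ∈ cj x L := by
        rw [mem_cj]; group; simpa using hg
      rwa [h] at h1
    · intro hg
      have h1 : x * g * x⁻¹ ∈ cj x L := by rw [h]; exact hg
      rw [mem_cj] at h1; group at h1; simpa using h1
  · intro h
    ext g
    rw [mem_cj]
    constructor
    · intro hg
      have h1 := (h (x⁻¹ * g * x)).mp hg
      group at h1; simpa using h1
    · intro hg
      refine (h (x⁻¹ * g * x)).mpr ?_
      group; simpa using hg

theorem cj_normalizer_eq {x : G} {H : Subgroup G} (hx : x ∈ (Subgroup.normalizer (H : Set G))) :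
    cj x (Subgroup.normalizer (H : Set G)) = (Subgroup.normalizer (H : Set G)) := by
  rw [cj_normalizer, cj_eq_self_iff.mpr hx]

/-- The measure used for downward strong induction. -/
noncomputable def meas (H : Subgroup G) : ℕ :=
  (univ.filter (fun M : Subgroup G => H < M)).card

theorem meas_lt {H L : Subgroup G} (h : H < L) : meas L < meas H := by
  apply Finset.card_lt_card
  constructor
  · intro M hM
    simp only [mem_filter, mem_univ, true_and] at hM ⊢
    exact lt_trans h hM
  · intro hsub
    have hL : L ∈ univ.filter (fun M : Subgroup G => H < M) := by
      simp [h]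
    have := hsub hL
    simp at this

theorem meas_cj (x : G) (H : Subgroup G) : meas (cj x H) = meas H := by
  unfold meas
  apply Finset.card_bij (fun M _ => cj x⁻¹ M)
  · intro M hM
    simp only [mem_filter, mem_univ, true_and] at hM ⊢
    have := cj_lt_cj (x := x⁻¹) hM
    rwa [cj_cancel] at this
  · intro a ha b hb hab
    exact cj_inj hab
  · intro M hM
    refine ⟨cj x M, ?_, by rw [cj_cancel]⟩
    simp only [mem_filter, mem_univ, true_and] at hM ⊢
    exact cj_lt_cj hM

section Mu

variable (μ : Subgroup G → Subgroup G → ℤ)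

/-- Conjugation invariance of the Möbius function values `μ(·, ⊤)`. -/
theorem nu_cj
    (hμ_self : ∀ K : Subgroup G, μ K K = 1)
    (hμ_lt : ∀ K K' : Subgroup G, K < K' →
      μ K K' = -∑ L ∈ Finset.univ.filter (fun L : Subgroup G => K < L ∧ L ≤ K'), μ L K') :
    ∀ (L : Subgroup G) (x : G), μ (cj x L) ⊤ = μ L ⊤ := by
  suffices h : ∀ (n : ℕ) (L : Subgroup G), meas L = n → ∀ x, μ (cj x L) ⊤ = μ L ⊤ by
    intro L x; exact h (meas L) L rfl x
  intro n
  induction n using Nat.strong_induction_on with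
  | _ n ih =>
    intro L hn x
    by_cases hT : L = ⊤
    · subst hT; rw [cj_top]
    · have hlt : L < ⊤ := lt_top_iff_ne_top.mpr hT
      have hlt' : cj x L < ⊤ := lt_top_iff_ne_top.mpr (fun hc => hT (cj_eq_top_iff.mp hc))
      rw [hμ_lt L ⊤ hlt, hμ_lt (cj x L) ⊤ hlt']
      congr 1
      apply Finset.sum_bij (fun M _ => cj x⁻¹ M)
      · intro M hM
        simp only [mem_filter, mem_univ, true_and] at hM ⊢
        have h2 := cj_lt_cj (x := x⁻¹) hM.1
        rw [cj_cancel] at h2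
        exact ⟨h2, le_top⟩
      · intro a _ b _ hab; exact cj_inj hab
      · intro M hM
        simp only [mem_filter, mem_univ, true_and] at hM
        refine ⟨cj x M, ?_, ?_⟩
        · simp only [mem_filter, mem_univ, true_and]
          exact ⟨cj_lt_cj hM.1, le_top⟩
        · rw [cj_cancel]
      · intro M hM
        simp only [mem_filter, mem_univ, true_and] at hM
        subst hn
        have h2 : L < cj x⁻¹ M := by
          have := cj_lt_cj (x := x⁻¹) hM.1
          rwa [cj_cancel] at this
        have := ih (meas (cj x⁻¹ M)) (meas_lt h2) (cj x⁻¹ M) rfl x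
        rw [cj_cj, mul_inv_cancel, cj_one] at this
        exact this

/-- The basic "delta" identity satisfied by the Möbius function. -/
theorem sum_nu
    (hμ_self : ∀ K : Subgroup G, μ K K = 1)
    (hμ_lt : ∀ K K' : Subgroup G, K < K' →
      μ K K' = -∑ L ∈ Finset.univ.filter (fun L : Subgroup G => K < L ∧ L ≤ K'), μ L K')
    (K : Subgroup G) :
    ∑ L ∈ univ.filter (fun L : Subgroup G => K ≤ L), μ L ⊤
      = if K = ⊤ then 1 else 0 := by
  by_cases hK : K = ⊤
  · subst hK
    rw [if_pos rfl]
    have : univ.filter (fun L : Subgroup G => (⊤ : Subgroup G) ≤ L) = {⊤} := by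
      ext L; simp [top_le_iff, eq_comm]
    rw [this, Finset.sum_singleton, hμ_self]
  · have hlt : K < ⊤ := lt_top_iff_ne_top.mpr hK
    have hrec := hμ_lt K ⊤ hlt
    have hsplit : univ.filter (fun L : Subgroup G => K ≤ L)
        = insert K (univ.filter (fun L : Subgroup G => K < L ∧ L ≤ ⊤)) := by
      ext L
      simp only [mem_filter, mem_univ, true_and, mem_insert, le_top, and_true]
      constructor
      · intro h
        rcases eq_or_lt_of_le h with h' | h'
        · exact Or.inl h'.symm
        · exact Or.inr h'
      · rintro (rfl | h)
        · exact le_refl _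
        · exact le_of_lt h
    have hnotmem : K ∉ univ.filter (fun L : Subgroup G => K < L ∧ L ≤ ⊤) := by
      simp [lt_irrefl]
    rw [hsplit, Finset.sum_insert hnotmem, if_neg hK]
    rw [hrec]
    ring

theorem card_filter_mem (K : Subgroup G) :
    (univ.filter (fun g : G => g ∈ K)).card = Nat.card ↥K := by
  rw [Nat.card_eq_fintype_card]
  exact (Fintype.card_subtype _).symm

/-- The key double-counting identity. -/
theorem identity3
    (hμ_self : ∀ K : Subgroup G, μ K K = 1)
    (hμ_lt : ∀ K K' : Subgroup G, K < K' →
      μ K K' = -∑ L ∈ Finset.univ.filter (fun L : Subgroup G => K < L ∧ L ≤ K'), μ L K')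
    (H : Subgroup G) :
    ∑ L ∈ univ.filter (fun L : Subgroup G => H < L),
        μ L ⊤ * ((univ.filter (fun g : G => g ∈ (Subgroup.normalizer (H : Set G)) ∧ g ∈ L)).card : ℤ)
      = ((univ.filter
            (fun g : G => g ∈ (Subgroup.normalizer (H : Set G)) ∧ H ⊔ Subgroup.zpowers g = ⊤)).card : ℤ)
        - (Nat.card ↥H : ℤ) * μ H ⊤ := by
  set A : Finset G := univ.filter (fun g : G => g ∈ (Subgroup.normalizer (H : Set G))) with hA
  have step1 : ∀ g ∈ A,
      ∑ L ∈ univ.filter (fun L : Subgroup G => H ⊔ Subgroup.zpowers g ≤ L ∧ L ≠ H), μ L ⊤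
        = (if H ⊔ Subgroup.zpowers g = ⊤ then (1 : ℤ) else 0)
          - (if g ∈ H then μ H ⊤ else 0) := by
    intro g _
    by_cases hg : g ∈ H
    · have hK : H ⊔ Subgroup.zpowers g = H := sup_eq_left.mpr (Subgroup.zpowers_le.mpr hg)
      rw [hK, if_pos hg]
      have herase : univ.filter (fun L : Subgroup G => H ≤ L ∧ L ≠ H)
          = (univ.filter (fun L : Subgroup G => H ≤ L)).erase H := by
        ext L
        simp only [mem_filter, mem_univ, true_and, mem_erase]
        tauto
      have hHmem : H ∈ univ.filter (fun L : Subgroup G => H ≤ L) := by simp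
      rw [herase, Finset.sum_erase_eq_sub hHmem, sum_nu μ hμ_self hμ_lt H]
    · have hfil : univ.filter (fun L : Subgroup G => H ⊔ Subgroup.zpowers g ≤ L ∧ L ≠ H)
          = univ.filter (fun L : Subgroup G => H ⊔ Subgroup.zpowers g ≤ L) := by
        ext L
        simp only [mem_filter, mem_univ, true_and, and_iff_left_iff_imp]
        exact fun hL hLH => hg (hLH ▸ hL (Subgroup.mem_sup_right (Subgroup.mem_zpowers g)))
      rw [hfil, sum_nu μ hμ_self hμ_lt _, if_neg hg, sub_zero]
  have swap : ∑ g ∈ A,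
      ∑ L ∈ univ.filter (fun L : Subgroup G => H ⊔ Subgroup.zpowers g ≤ L ∧ L ≠ H), μ L ⊤
        = ∑ L ∈ univ.filter (fun L : Subgroup G => H < L),
            μ L ⊤ * ((univ.filter (fun g : G => g ∈ (Subgroup.normalizer (H : Set G)) ∧ g ∈ L)).card : ℤ) := by
    have h1 : ∀ g ∈ A,
        ∑ L ∈ univ.filter (fun L : Subgroup G => H ⊔ Subgroup.zpowers g ≤ L ∧ L ≠ H), μ L ⊤
          = ∑ L ∈ univ,
              if H ⊔ Subgroup.zpowers g ≤ L ∧ L ≠ H then μ L ⊤ else 0 := by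
      intro g _
      rw [Finset.sum_filter]
    rw [Finset.sum_congr rfl h1, Finset.sum_comm]
    have h2 : ∀ L : Subgroup G,
        (∑ g ∈ A, if H ⊔ Subgroup.zpowers g ≤ L ∧ L ≠ H then μ L ⊤ else 0)
          = if H < L then
              μ L ⊤ * ((univ.filter (fun g : G => g ∈ (Subgroup.normalizer (H : Set G)) ∧ g ∈ L)).card : ℤ)
            else 0 := by
      intro L
      have hcond : ∀ g : G, (H ⊔ Subgroup.zpowers g ≤ L ∧ L ≠ H) ↔ (H < L ∧ g ∈ L) := by
        intro g
        rw [sup_le_iff, Subgroup.zpowers_le]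
        constructor
        · rintro ⟨⟨h1', h2'⟩, h3'⟩
          exact ⟨lt_of_le_of_ne h1' (Ne.symm h3'), h2'⟩
        · rintro ⟨h1', h2'⟩
          exact ⟨⟨le_of_lt h1', h2'⟩, (ne_of_gt h1')⟩
      by_cases hHL : H < L
      · rw [if_pos hHL]
        have : ∀ g ∈ A, (if H ⊔ Subgroup.zpowers g ≤ L ∧ L ≠ H then μ L ⊤ else 0)
            = if g ∈ L then μ L ⊤ else 0 := by
          intro g _
          simp only [hcond g, hHL, true_and]
        rw [Finset.sum_congr rfl this, Finset.sum_ite, Finset.sum_const,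
          Finset.sum_const_zero, add_zero, hA, Finset.filter_filter]
        push_cast
        ring
      · have : ∀ g ∈ A, (if H ⊔ Subgroup.zpowers g ≤ L ∧ L ≠ H then μ L ⊤ else 0) = 0 := by
          intro g _
          exact if_neg (fun hc => hHL ((hcond g).mp hc).1)
        rw [Finset.sum_congr rfl this, Finset.sum_const_zero, if_neg hHL]
    rw [Finset.sum_congr rfl (fun L _ => h2 L), ← Finset.sum_filter]
  have hrhs : ∑ g ∈ A,
      ((if H ⊔ Subgroup.zpowers g = ⊤ then (1 : ℤ) else 0) - (if g ∈ H then μ H ⊤ else 0))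
        = ((univ.filter
            (fun g : G => g ∈ (Subgroup.normalizer (H : Set G)) ∧ H ⊔ Subgroup.zpowers g = ⊤)).card : ℤ)
          - (Nat.card ↥H : ℤ) * μ H ⊤ := by
    rw [Finset.sum_sub_distrib]
    congr 1
    · rw [Finset.sum_ite, Finset.sum_const, Finset.sum_const_zero, add_zero, hA,
        Finset.filter_filter]
      simp
    · rw [Finset.sum_ite, Finset.sum_const, Finset.sum_const_zero, add_zero, hA,
        Finset.filter_filter]
      have : univ.filter (fun g : G => g ∈ (Subgroup.normalizer (H : Set G)) ∧ g ∈ H)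
          = univ.filter (fun g : G => g ∈ H) := by
        ext g
        simp only [mem_filter, mem_univ, true_and, and_iff_right_iff_imp]
        exact fun hg => Subgroup.le_normalizer hg
      rw [this, card_filter_mem]
      push_cast
      ring
  rw [← swap, Finset.sum_congr rfl step1, hrhs]

end Mu

theorem gt1 (L M : Subgroup G) : Nat.card ↥M = L.relIndex M * Nat.card ↥(L ⊓ M) := by
  have h1 := Subgroup.index_mul_card (L.subgroupOf M)
  have h2 : Nat.card ↥(L.subgroupOf M) = Nat.card ↥(L ⊓ M) := by
    rw [← Subgroup.inf_subgroupOf_right L M]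
    exact Nat.card_congr (Subgroup.subgroupOfEquivOfLe inf_le_right).toEquiv
  rw [← h1, h2]
  rfl

theorem gt2 (L M : Subgroup G) (h : M ≤ (Subgroup.normalizer (L : Set G))) :
    L.relIndex M ∣ L.relIndex (Subgroup.normalizer (L : Set G)) := by
  rw [← Subgroup.relIndex_subgroupOf h]
  haveI : (L.subgroupOf (Subgroup.normalizer (L : Set G))).Normal := Subgroup.normal_in_normalizer
  rw [← QuotientGroup.ker_mk' (L.subgroupOf (Subgroup.normalizer (L : Set G))), Subgroup.relIndex_ker]
  have hle := Subgroup.card_subgroup_dvd_card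
    ((M.subgroupOf (Subgroup.normalizer (L : Set G))).map (QuotientGroup.mk' (L.subgroupOf (Subgroup.normalizer (L : Set G)))))
  have : Nat.card (↥(Subgroup.normalizer (L : Set G)) ⧸ (L.subgroupOf (Subgroup.normalizer (L : Set G))))
      = L.relIndex (Subgroup.normalizer (L : Set G)) := (Subgroup.index_eq_card _).symm
  rwa [this] at hle

theorem orbit_sum (H : Subgroup G) (f : Subgroup G → ℤ)
    (hinv : ∀ x ∈ (Subgroup.normalizer (H : Set G)), ∀ L : Subgroup G, f (cj x L) = f L) :
    ∀ s : Finset (Subgroup G),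
      (∀ L ∈ s, ∀ x ∈ (Subgroup.normalizer (H : Set G)), cj x L ∈ s) →
      (∀ L ∈ s, (Nat.card ↥((Subgroup.normalizer (H : Set G)) ⊓ (Subgroup.normalizer (L : Set G))) : ℤ) ∣ f L) →
      (Nat.card ↥(Subgroup.normalizer (H : Set G)) : ℤ) ∣ ∑ L ∈ s, f L := by
  intro s
  induction s using Finset.strongInduction with
  | _ s ih =>
    intro hcl hdvd
    rcases s.eq_empty_or_nonempty with rfl | ⟨L0, hL0⟩
    · simp
    set A : Finset G := univ.filter (fun g : G => g ∈ (Subgroup.normalizer (H : Set G))) with hA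
    have hAmem : ∀ x : G, x ∈ A ↔ x ∈ (Subgroup.normalizer (H : Set G)) := by intro x; simp [hA]
    set O : Finset (Subgroup G) := A.image (fun x => cj x L0) with hO
    have hOs : O ⊆ s := by
      intro L hL
      obtain ⟨x, hx, rfl⟩ := Finset.mem_image.mp hL
      exact hcl L0 hL0 x ((hAmem x).mp hx)
    have hL0O : L0 ∈ O := by
      refine Finset.mem_image.mpr ⟨1, (hAmem 1).mpr (one_mem _), cj_one L0⟩
    have hsplit : s = O ∪ (s \ O) := (Finset.union_sdiff_of_subset hOs).symm
    rw [hsplit, Finset.sum_union Finset.disjoint_sdiff]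
    have hrest : (Nat.card ↥(Subgroup.normalizer (H : Set G)) : ℤ) ∣ ∑ L ∈ s \ O, f L := by
      refine ih (s \ O) (Finset.sdiff_ssubset hOs ⟨L0, hL0O⟩) ?_ ?_
      · intro L hL x hx
        rw [Finset.mem_sdiff] at hL ⊢
        refine ⟨hcl L hL.1 x hx, fun hmem => hL.2 ?_⟩
        obtain ⟨y, hy, hxy⟩ := Finset.mem_image.mp hmem
        have : L = cj (x⁻¹ * y) L0 := by
          rw [← cj_cj, hxy, cj_cancel]
        rw [this]
        exact Finset.mem_image.mpr ⟨x⁻¹ * y,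
          (hAmem _).mpr (mul_mem (inv_mem hx) ((hAmem y).mp hy)), rfl⟩
      · intro L hL
        exact hdvd L (Finset.mem_sdiff.mp hL).1
    refine dvd_add ?_ hrest
    -- orbit part
    set St : Finset G := A.filter (fun x => cj x L0 = L0) with hSt
    have hStcard : St.card = Nat.card ↥((Subgroup.normalizer (H : Set G)) ⊓ (Subgroup.normalizer (L0 : Set G))) := by
      rw [← card_filter_mem ((Subgroup.normalizer (H : Set G)) ⊓ (Subgroup.normalizer (L0 : Set G)))]
      congr 1
      ext g
      simp only [hSt, hA, Finset.mem_filter, Finset.mem_univ, true_and, Subgroup.mem_inf]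
      rw [cj_eq_self_iff]
    have fiber : ∀ L ∈ O, (A.filter (fun x => cj x L0 = L)).card = St.card := by
      intro L hL
      obtain ⟨x0, hx0A, hx0⟩ := Finset.mem_image.mp hL
      symm
      apply Finset.card_bij (fun (y : G) _ => x0 * y)
      · intro y hy
        rw [Finset.mem_filter] at hy ⊢
        refine ⟨(hAmem _).mpr (mul_mem ((hAmem x0).mp hx0A) ((hAmem y).mp hy.1)), ?_⟩
        rw [← cj_cj, hy.2, hx0]
      · intro a _ b _ hab; exact mul_left_cancel hab
      · intro x hx
        rw [Finset.mem_filter] at hx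
        refine ⟨x0⁻¹ * x, ?_, by group⟩
        rw [Finset.mem_filter]
        refine ⟨(hAmem _).mpr (mul_mem (inv_mem ((hAmem x0).mp hx0A)) ((hAmem x).mp hx.1)), ?_⟩
        rw [← cj_cj, hx.2, ← hx0, cj_cancel]
    -- now the counting identity on the orbit O
    have way12 : (St.card : ℤ) * ∑ L ∈ O, f L = (A.card : ℤ) * f L0 := by
      have w1 : ∑ x ∈ A, f (cj x L0) = (A.card : ℤ) * f L0 := by
        rw [Finset.sum_congr rfl (fun x hx => hinv x ((hAmem x).mp hx) L0)]
        rw [Finset.sum_const, nsmul_eq_mul]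
      have w2 : ∑ x ∈ A, f (cj x L0) = ∑ L ∈ O, (St.card : ℤ) * f L := by
        rw [← Finset.sum_fiberwise_of_maps_to (g := fun x => cj x L0) (t := O)
          (fun x hx => Finset.mem_image.mpr ⟨x, hx, rfl⟩)]
        refine Finset.sum_congr rfl (fun L hL => ?_)
        have : ∀ x ∈ A.filter (fun x => cj x L0 = L), f (cj x L0) = f L := by
          intro x hx
          rw [(Finset.mem_filter.mp hx).2]
        rw [Finset.sum_congr rfl this, Finset.sum_const, nsmul_eq_mul, fiber L hL]
      rw [← w1, w2, Finset.mul_sum]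
    have hdvd0 : (St.card : ℤ) ∣ f L0 := by
      rw [hStcard]
      exact hdvd L0 hL0
    obtain ⟨d, hd⟩ := hdvd0
    have hSt1 : (1 : G) ∈ St := by
      rw [Finset.mem_filter]
      exact ⟨(hAmem 1).mpr (one_mem _), cj_one L0⟩
    have hStne : (St.card : ℤ) ≠ 0 := by
      simp only [ne_eq, Nat.cast_eq_zero, Finset.card_eq_zero]
      exact fun h => by simp [h] at hSt1
    have hsum : ∑ L ∈ O, f L = (A.card : ℤ) * d := by
      apply mul_left_cancel₀ hStne
      rw [way12, hd]
      ring
    rw [hsum]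
    have hAcard : (A.card : ℤ) = (Nat.card ↥(Subgroup.normalizer (H : Set G)) : ℤ) := by
      rw [hA, card_filter_mem]
    rw [hAcard]
    exact Dvd.intro d rfl

theorem cyc (H : Subgroup G) :
    (Nat.card ↥(Subgroup.normalizer (H : Set G)) : ℤ) ∣
      (((commutator G).index.primeFactors.prod id : ℕ) : ℤ) *
        ((univ.filter
          (fun g : G => g ∈ (Subgroup.normalizer (H : Set G)) ∧ H ⊔ Subgroup.zpowers g = ⊤)).card : ℤ) := by
  set r : ℕ := (commutator G).index.primeFactors.prod id with hr
  set cfin := univ.filter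
      (fun g : G => g ∈ (Subgroup.normalizer (H : Set G)) ∧ H ⊔ Subgroup.zpowers g = ⊤) with hcfin
  suffices h : Nat.card ↥(Subgroup.normalizer (H : Set G)) ∣ r * cfin.card by
    have := Int.natCast_dvd_natCast.mpr h
    push_cast at this
    convert this using 2
  by_cases hc : cfin.card = 0
  · rw [hc, Nat.mul_zero]
    exact dvd_zero _
  obtain ⟨g0, hg0mem⟩ := Finset.card_ne_zero.mp hc
  rw [hcfin, Finset.mem_filter] at hg0mem
  obtain ⟨-, hg0N, hg0⟩ := hg0mem
  have hNtop : (Subgroup.normalizer (H : Set G)) = ⊤ := by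
    apply top_le_iff.mp
    rw [← hg0]
    exact sup_le Subgroup.le_normalizer (Subgroup.zpowers_le.mpr hg0N)
  haveI hnormal : H.Normal := Subgroup.normalizer_eq_top_iff.mp hNtop
  set π := QuotientGroup.mk' H with hπ
  have hcond : ∀ g : G, (H ⊔ Subgroup.zpowers g = ⊤) ↔ Subgroup.zpowers (π g) = ⊤ := by
    intro g
    have hmap : Subgroup.map π (H ⊔ Subgroup.zpowers g) = Subgroup.zpowers (π g) := by
      rw [Subgroup.map_sup, MonoidHom.map_zpowers, QuotientGroup.map_mk'_self, bot_sup_eq]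
    constructor
    · intro h
      rw [← hmap, h]
      exact Subgroup.map_top_of_surjective π (QuotientGroup.mk'_surjective H)
    · intro h
      have h2 := congrArg (Subgroup.comap π) hmap
      rw [Subgroup.comap_map_eq, QuotientGroup.ker_mk', h,
        sup_eq_left.mpr (le_sup_left : H ≤ H ⊔ Subgroup.zpowers g)] at h2
      rw [h2, ← Subgroup.comap_top π]
  -- count fibers
  have hfibcard : ∀ q : G ⧸ H, (univ.filter (fun g : G => π g = q)).card = Nat.card ↥H := by
    intro q
    obtain ⟨a, rfl⟩ := QuotientGroup.mk'_surjective H q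
    rw [← card_filter_mem H]
    symm
    apply Finset.card_bij (fun (h : G) _ => a * h)
    · intro h hh
      rw [Finset.mem_filter] at hh ⊢
      refine ⟨Finset.mem_univ _, ?_⟩
      have : π h = 1 := (QuotientGroup.eq_one_iff h).mpr hh.2
      rw [map_mul, this, mul_one]
    · intro x _ y _ hxy; exact mul_left_cancel hxy
    · intro x hx
      rw [Finset.mem_filter] at hx
      refine ⟨a⁻¹ * x, ?_, by group⟩
      rw [Finset.mem_filter]
      refine ⟨Finset.mem_univ _, ?_⟩
      have : (a : G ⧸ H) = (x : G ⧸ H) := hx.2.symm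
      exact QuotientGroup.eq.mp this
  set Ngen := (univ.filter (fun q : G ⧸ H => Subgroup.zpowers q = ⊤)).card with hNgen
  have hcount : cfin.card = Ngen * Nat.card ↥H := by
    have h1 : cfin = univ.filter (fun g : G => Subgroup.zpowers (π g) = ⊤) := by
      rw [hcfin]
      ext g
      simp only [Finset.mem_filter, Finset.mem_univ, true_and, hNtop, Subgroup.mem_top,
        true_and]
      exact hcond g
    rw [h1, Finset.card_eq_sum_card_fiberwise
      (f := fun g : G => π g) (t := univ.filter (fun q : G ⧸ H => Subgroup.zpowers q = ⊤))
      (fun g hg => by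
        rw [Finset.mem_coe, Finset.mem_filter] at hg ⊢
        exact ⟨Finset.mem_univ _, hg.2⟩)]
    have : ∀ q ∈ univ.filter (fun q : G ⧸ H => Subgroup.zpowers q = ⊤),
        ((univ.filter (fun g : G => Subgroup.zpowers (π g) = ⊤)).filter
          (fun g : G => π g = q)).card = Nat.card ↥H := by
      intro q hq
      rw [Finset.mem_filter] at hq
      rw [← hfibcard q]
      congr 1
      ext g
      simp only [Finset.mem_filter, Finset.mem_univ, true_and]
      constructor
      · exact fun h => h.2
      · intro h
        exact ⟨by rw [h]; exact hq.2, h⟩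
    rw [Finset.sum_congr rfl this, Finset.sum_const, smul_eq_mul]
  -- Q is cyclic
  haveI : IsCyclic (G ⧸ H) := by
    refine ⟨⟨π g0, fun x => ?_⟩⟩
    have h2 : x ∈ Subgroup.zpowers (π g0) := by
      rw [(hcond g0).mp hg0]
      exact Subgroup.mem_top x
    exact h2
  have horder : ∀ q : G ⧸ H, Subgroup.zpowers q = ⊤ ↔ orderOf q = Fintype.card (G ⧸ H) := by
    intro q
    constructor
    · intro h
      rw [← Nat.card_zpowers, h, Subgroup.card_top, Nat.card_eq_fintype_card]
    · intro h
      apply Subgroup.eq_top_of_card_eq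
      rw [Nat.card_zpowers, h, Nat.card_eq_fintype_card]
  have hNgenval : Ngen = Nat.totient (Fintype.card (G ⧸ H)) := by
    rw [hNgen]
    rw [show (univ.filter (fun q : G ⧸ H => Subgroup.zpowers q = ⊤))
        = univ.filter (fun q : G ⧸ H => orderOf q = Fintype.card (G ⧸ H)) from by
      ext q; simp only [Finset.mem_filter, Finset.mem_univ, true_and]; exact horder q]
    exact IsCyclic.card_orderOf_eq_totient dvd_rfl
  set n := Fintype.card (G ⧸ H) with hn
  -- n divides r * totient n
  have hindex : H.index = n := by
    rw [Subgroup.index_eq_card, Nat.card_eq_fintype_card]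
  have hcomm : commutator G ≤ H := by
    letI : CommGroup (G ⧸ H) := IsCyclic.commGroup
    have := Abelianization.commutator_subset_ker (π : G →* G ⧸ H)
    rwa [QuotientGroup.ker_mk'] at this
  have hdvdidx : n ∣ (commutator G).index := by
    rw [← hindex]
    exact Subgroup.index_dvd_of_le hcomm
  have hm0 : (commutator G).index ≠ 0 := Subgroup.index_ne_zero_of_finite
  have hradn : (n.primeFactors.prod id) ∣ r := by
    rw [hr]
    exact Finset.prod_dvd_prod_of_subset _ _ id (Nat.primeFactors_mono hdvdidx hm0)
  have hnd : n ∣ Nat.totient n * (n.primeFactors.prod id) := by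
    have := Nat.totient_mul_prod_primeFactors n
    exact Dvd.intro _ (by rw [← this]; rfl)
  have hnd2 : n ∣ r * Nat.totient n := by
    calc n ∣ Nat.totient n * (n.primeFactors.prod id) := hnd
    _ ∣ Nat.totient n * r := mul_dvd_mul_left _ hradn
    _ = r * Nat.totient n := mul_comm _ _
  -- assemble
  have hcardN : Nat.card ↥(Subgroup.normalizer (H : Set G)) = n * Nat.card ↥H := by
    rw [hNtop, Subgroup.card_top, ← Subgroup.index_mul_card H, hindex]
  rw [hcardN, hcount, hNgenval]
  rw [show r * (Nat.totient n * Nat.card ↥H) = (r * Nat.totient n) * Nat.card ↥H from by ring]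
  exact mul_dvd_mul hnd2 dvd_rfl

theorem main
    (μ : Subgroup G → Subgroup G → ℤ)
    (hμ_self : ∀ K : Subgroup G, μ K K = 1)
    (hμ_lt : ∀ K K' : Subgroup G, K < K' →
      μ K K' = -∑ L ∈ Finset.univ.filter (fun L : Subgroup G => K < L ∧ L ≤ K'), μ L K') :
    ∀ H : Subgroup G,
      (Nat.card ↥(Subgroup.normalizer (H : Set G)) : ℤ) ∣
        (Nat.card ↥H : ℤ) *
          ((((commutator G).index.primeFactors.prod id : ℕ) : ℤ) * μ H ⊤) := by
  set r : ℤ := (((commutator G).index.primeFactors.prod id : ℕ) : ℤ) with hrdef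
  suffices h : ∀ (n : ℕ) (H : Subgroup G), meas H = n →
      (Nat.card ↥(Subgroup.normalizer (H : Set G)) : ℤ) ∣ (Nat.card ↥H : ℤ) * (r * μ H ⊤) by
    intro H; exact h (meas H) H rfl
  intro n
  induction n using Nat.strong_induction_on with
  | _ n ih =>
    intro H hn
    have hid := identity3 μ hμ_self hμ_lt H
    -- the orbit-sum congruence
    have hkey : (Nat.card ↥(Subgroup.normalizer (H : Set G)) : ℤ) ∣
        ∑ L ∈ univ.filter (fun L : Subgroup G => H < L),
          (r * μ L ⊤) *
            ((univ.filter (fun g : G => g ∈ (Subgroup.normalizer (H : Set G)) ∧ g ∈ L)).card : ℤ) := by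
      apply orbit_sum H
      · -- invariance
        intro x hx L
        have h1 : μ (cj x L) ⊤ = μ L ⊤ := nu_cj μ hμ_self hμ_lt L x
        have h2 : (univ.filter (fun g : G => g ∈ (Subgroup.normalizer (H : Set G)) ∧ g ∈ cj x L)).card
            = (univ.filter (fun g : G => g ∈ (Subgroup.normalizer (H : Set G)) ∧ g ∈ L)).card := by
          symm
          apply Finset.card_bij (fun (g : G) _ => x * g * x⁻¹)
          · intro g hg
            rw [Finset.mem_filter] at hg ⊢
            refine ⟨Finset.mem_univ _, mul_mem (mul_mem hx hg.2.1) (inv_mem hx), ?_⟩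
            rw [mem_cj]
            have : x⁻¹ * (x * g * x⁻¹) * x = g := by group
            rw [this]
            exact hg.2.2
          · intro a _ b _ hab
            have : x * a = x * b := mul_right_cancel hab
            exact mul_left_cancel this
          · intro g hg
            rw [Finset.mem_filter] at hg
            refine ⟨x⁻¹ * g * x, ?_, by group⟩
            rw [Finset.mem_filter]
            have h3 := hg.2.2
            rw [mem_cj] at h3
            exact ⟨Finset.mem_univ _, ⟨mul_mem (mul_mem (inv_mem hx) hg.2.1) hx, h3⟩⟩
        rw [h1, h2]
      · -- closure
        intro L hL x hx
        rw [Finset.mem_filter] at hL ⊢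
        refine ⟨Finset.mem_univ _, ?_⟩
        have := cj_lt_cj (x := x) hL.2
        rwa [cj_eq_self_iff.mpr hx] at this
      · -- per-element divisibility
        intro L hL
        rw [Finset.mem_filter] at hL
        have hHL : H < L := hL.2
        have hih := ih (meas L) (hn ▸ meas_lt hHL) L rfl
        -- rewrite μ's divisibility via relIndex
        have hcardL : (0 : ℤ) < (Nat.card ↥L : ℤ) := by
          exact_mod_cast Nat.card_pos
        have hNL : Nat.card ↥(Subgroup.normalizer (L : Set G))
            = L.relIndex (Subgroup.normalizer (L : Set G)) * Nat.card ↥L := by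
          have := gt1 L (Subgroup.normalizer (L : Set G))
          rwa [inf_eq_left.mpr Subgroup.le_normalizer] at this
        obtain ⟨d, hd⟩ := hih
        have hmu : r * μ L ⊤ = (L.relIndex (Subgroup.normalizer (L : Set G)) : ℤ) * d := by
          apply mul_left_cancel₀ (ne_of_gt hcardL)
          rw [hd, hNL]
          push_cast
          ring
        set M : Subgroup G := (Subgroup.normalizer (H : Set G)) ⊓ (Subgroup.normalizer (L : Set G)) with hM
        have hMcard : Nat.card ↥M = L.relIndex M * Nat.card ↥(L ⊓ (Subgroup.normalizer (H : Set G))) := by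
          have h1 := gt1 L M
          have h2 : L ⊓ M = L ⊓ (Subgroup.normalizer (H : Set G)) := by
            rw [hM, ← inf_assoc, inf_comm L (Subgroup.normalizer (H : Set G)), inf_assoc,
              inf_eq_left.mpr Subgroup.le_normalizer]
          rwa [h2] at h1
        obtain ⟨e, he⟩ := gt2 L M inf_le_right
        have hcnt : ((univ.filter (fun g : G => g ∈ (Subgroup.normalizer (H : Set G)) ∧ g ∈ L)).card : ℤ)
            = (Nat.card ↥(L ⊓ (Subgroup.normalizer (H : Set G))) : ℤ) := by
          rw [← card_filter_mem (L ⊓ (Subgroup.normalizer (H : Set G)))]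
          congr 2
          ext g
          simp only [Finset.mem_filter, Finset.mem_univ, true_and, Subgroup.mem_inf]
          tauto
        rw [hcnt, hmu]
        refine ⟨(e : ℤ) * d, ?_⟩
        rw [hMcard, he]
        push_cast
        ring
    have hcyc := cyc (G := G) H
    -- assemble
    have hgoal : (Nat.card ↥H : ℤ) * (r * μ H ⊤)
        = r * ((univ.filter
            (fun g : G => g ∈ (Subgroup.normalizer (H : Set G)) ∧ H ⊔ Subgroup.zpowers g = ⊤)).card : ℤ)
          - ∑ L ∈ univ.filter (fun L : Subgroup G => H < L),
              (r * μ L ⊤) *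
                ((univ.filter (fun g : G => g ∈ (Subgroup.normalizer (H : Set G)) ∧ g ∈ L)).card : ℤ) := by
      have h1 : ∑ L ∈ univ.filter (fun L : Subgroup G => H < L),
          (r * μ L ⊤) *
            ((univ.filter (fun g : G => g ∈ (Subgroup.normalizer (H : Set G)) ∧ g ∈ L)).card : ℤ)
          = r * ∑ L ∈ univ.filter (fun L : Subgroup G => H < L),
              μ L ⊤ * ((univ.filter (fun g : G => g ∈ (Subgroup.normalizer (H : Set G)) ∧ g ∈ L)).card : ℤ) := by
        rw [Finset.mul_sum]
        exact Finset.sum_congr rfl (fun L _ => by ring)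
      rw [h1, hid]
      ring
    rw [hgoal]
    exact dvd_sub hcyc hkey

end KT

open scoped Classical in
/-- Kratzer–Thévenaz: `μ(1,G)` is divisible by `|G| / |G:G'|₀`, where `G'` is
the commutator subgroup and `|G:G'|₀` is the square-free part (radical) of the
index `|G:G'|`. -/
theorem stmt10 {G : Type*} [Group G] [Fintype G]
    (μ : Subgroup G → Subgroup G → ℤ)
    (hμ_self : ∀ K : Subgroup G, μ K K = 1)
    (hμ_lt : ∀ K K' : Subgroup G, K < K' →
      μ K K' = -∑ L ∈ Finset.univ.filter (fun L : Subgroup G => K < L ∧ L ≤ K'), μ L K') :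
    ((Nat.card G / ((commutator G).index.primeFactors.prod id) : ℕ) : ℤ) ∣
      μ ⊥ ⊤ := by
  have hmain := KT.main μ hμ_self hμ_lt ⊥
  set r : ℕ := (commutator G).index.primeFactors.prod id with hr
  have hnorm : (Subgroup.normalizer ((⊥ : Subgroup G) : Set G)) = ⊤ := by
    rw [eq_top_iff]
    intro g _
    rw [Subgroup.mem_normalizer_iff]
    intro h
    simp
  rw [hnorm, Subgroup.card_top, Subgroup.card_bot] at hmain
  rw [Nat.cast_one, one_mul] at hmain
  -- hmain : (Nat.card G : ℤ) ∣ r * μ ⊥ ⊤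
  have hrdvd : r ∣ Nat.card G := by
    calc r ∣ (commutator G).index := Nat.prod_primeFactors_dvd _
    _ ∣ Nat.card G := Subgroup.index_dvd_card _
  obtain ⟨k, hk⟩ := hrdvd
  have hr0 : r ≠ 0 := by
    intro h0
    rw [h0, Nat.zero_mul] at hk
    exact Nat.card_pos.ne' hk
  have hquot : Nat.card G / r = k := by
    rw [hk, Nat.mul_div_cancel_left _ (Nat.pos_of_ne_zero hr0)]
  obtain ⟨t, ht⟩ := hmain
  have hmu : μ ⊥ ⊤ = (k : ℤ) * t := by
    have h2 : (r : ℤ) * μ ⊥ ⊤ = (r : ℤ) * ((k : ℤ) * t) := by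
      rw [ht, hk]
      push_cast
      ring
    exact mul_left_cancel₀ (by exact_mod_cast hr0) h2
  rw [hquot, hmu]
  exact Dvd.intro t rfl
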